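/- Let n ≥ 1 and let l satisfy q^l ≥ n. Define b_0 = 1 and, for j > 0, b_j = ∏_{i=1}^{l_j−1}(θ^{q^i} − t) · ∂_θ^{(j)}( ∏_{i=1}^{l_j−1}(θ^{q^i} − t)^{−1} ) ∈ 𝔽_q(θ,t) with l_j = ⌊log_q(j)⌋ + 1. Then for every k with 0 ≤ k < n: Σ_{i+j=k} ( ∂_t^{(i)}(b_j) )|_{t=θ} = ( ∂_θ^{(k)}(η_{l−1}) )|_{t=θ}, all rational functions involved being regular at t = θ. -/

import Mathlib

noncomputable section

open Polynomial Finset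

variable (F : Type*) [Field F]

/-- The Hasse derivative with respect to `θ` on `𝔽_q[θ,t]`, modelled as
`F[θ][t]` (outer variable `t`): it acts coefficientwise by the Hasse derivative on `F[θ]`. -/
def hasseDerivTheta (n : ℕ) (f : Polynomial (Polynomial F)) : Polynomial (Polynomial F) :=
  f.sum fun i a => Polynomial.C (Polynomial.hasseDeriv n a) * Polynomial.X ^ i

/-- The embedding `𝔽_q[θ,t] → 𝔽_q(θ,t)`, i.e. `F[θ][t] → (RatFunc F)(t)`. -/
def embPoly : Polynomial (Polynomial F) →+* RatFunc (RatFunc F) :=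
  (algebraMap (Polynomial (RatFunc F)) (RatFunc (RatFunc F))).comp
    (Polynomial.mapRingHom (algebraMap (Polynomial F) (RatFunc F)))

/-- `∏_{i=1}^{l_j−1}(θ^{q^i} − t) ∈ 𝔽_q(θ,t)` with `l_j = ⌊log_q j⌋ + 1`
(so the product runs over `1 ≤ i ≤ ⌊log_q j⌋`), `θ = RatFunc.X : RatFunc F`. -/
def Lprod (q j : ℕ) : RatFunc (RatFunc F) :=
  algebraMap (Polynomial (RatFunc F)) (RatFunc (RatFunc F))
    (∏ i ∈ Icc 1 (Nat.log q j),
      (Polynomial.C ((RatFunc.X : RatFunc F) ^ q ^ i) - Polynomial.X))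

/-- `η_l(t) = ∏_{m=1}^l (t^{q^m}−θ)/(θ^{q^m}−θ) ∈ K[t]`. -/
def etaPoly (q l : ℕ) : Polynomial (RatFunc F) :=
  ∏ m ∈ Icc 1 l,
    Polynomial.C (((RatFunc.X : RatFunc F) ^ q ^ m - RatFunc.X)⁻¹) *
      (Polynomial.X ^ q ^ m - Polynomial.C (RatFunc.X : RatFunc F))

namespace S7

open PowerSeries

variable {A B : Type*} [CommRing A] [CommRing B]

def PSRel (R : A → B → Prop) (Φ : PowerSeries A) (Ψ : PowerSeries B) : Prop :=
  ∀ n, R ((PowerSeries.coeff n) Φ) ((PowerSeries.coeff n) Ψ)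

section PSRel

variable {R : A → B → Prop}

theorem Rsum (Rzero : R 0 0)
    (Radd : ∀ {x y x' y'}, R x y → R x' y' → R (x + x') (y + y'))
    {ι : Type*} (s : Finset ι) (f : ι → A) (g : ι → B)
    (h : ∀ i ∈ s, R (f i) (g i)) : R (∑ i ∈ s, f i) (∑ i ∈ s, g i) := by
  classical
  induction s using Finset.induction_on with
  | empty => simpa using Rzero
  | insert _ _ hx ih =>
    rename_i a s
    rw [Finset.sum_insert hx, Finset.sum_insert hx]
    exact Radd (h a (mem_insert_self a s)) (ih fun i hi => h i (mem_insert_of_mem hi))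

theorem PSRel_add {Φ Φ' Ψ Ψ'} (Radd : ∀ {x y x' y'}, R x y → R x' y' → R (x + x') (y + y'))
    (h : PSRel R Φ Ψ) (h' : PSRel R Φ' Ψ') : PSRel R (Φ + Φ') (Ψ + Ψ') := by
  intro n; rw [map_add, map_add]; exact Radd (h n) (h' n)

theorem PSRel_mul {Φ Φ' Ψ Ψ'} (Rzero : R 0 0)
    (Radd : ∀ {x y x' y'}, R x y → R x' y' → R (x + x') (y + y'))
    (Rmul : ∀ {x y x' y'}, R x y → R x' y' → R (x * x') (y * y'))
    (h : PSRel R Φ Ψ) (h' : PSRel R Φ' Ψ') : PSRel R (Φ * Φ') (Ψ * Ψ') := by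
  intro n
  rw [PowerSeries.coeff_mul, PowerSeries.coeff_mul]
  exact Rsum Rzero Radd _ _ _ fun ij _ => Rmul (h ij.1) (h' ij.2)

theorem PSRel_one (Rzero : R 0 0) (Rone : R 1 1) : PSRel R 1 1 := by
  intro n
  rw [PowerSeries.coeff_one, PowerSeries.coeff_one]
  split <;> [exact Rone; exact Rzero]

theorem PSRel_C (Rzero : R 0 0) {x y} (h : R x y) :
    PSRel R (PowerSeries.C x) (PowerSeries.C y) := by
  intro n
  rw [PowerSeries.coeff_C, PowerSeries.coeff_C]
  split <;> [exact h; exact Rzero]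

theorem PSRel_X (Rzero : R 0 0) (Rone : R 1 1) :
    PSRel R (PowerSeries.X : PowerSeries A) (PowerSeries.X : PowerSeries B) := by
  intro n
  rw [PowerSeries.coeff_X, PowerSeries.coeff_X]
  split <;> [exact Rone; exact Rzero]

theorem PSRel_X_pow (Rzero : R 0 0) (Rone : R 1 1) (N : ℕ) :
    PSRel R ((PowerSeries.X : PowerSeries A) ^ N) ((PowerSeries.X : PowerSeries B) ^ N) := by
  intro n
  rw [PowerSeries.coeff_X_pow, PowerSeries.coeff_X_pow]
  split <;> [exact Rone; exact Rzero]

theorem PSRel_prod (Rzero : R 0 0) (Rone : R 1 1)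
    (Radd : ∀ {x y x' y'}, R x y → R x' y' → R (x + x') (y + y'))
    (Rmul : ∀ {x y x' y'}, R x y → R x' y' → R (x * x') (y * y'))
    {ι : Type*} (s : Finset ι) (f : ι → PowerSeries A) (g : ι → PowerSeries B)
    (h : ∀ i ∈ s, PSRel R (f i) (g i)) :
    PSRel R (∏ i ∈ s, f i) (∏ i ∈ s, g i) := by
  classical
  induction s using Finset.induction_on with
  | empty => simpa using PSRel_one Rzero Rone
  | insert _ _ hx ih =>
    rename_i a s
    rw [Finset.prod_insert hx, Finset.prod_insert hx]
    exact PSRel_mul Rzero Radd Rmul (h a (mem_insert_self a s))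
      (ih fun i hi => h i (mem_insert_of_mem hi))

/-- transfer of relations to inverses -/
theorem PSRel_inv (Rzero : R 0 0) (Rone : R 1 1)
    (Radd : ∀ {x y x' y'}, R x y → R x' y' → R (x + x') (y + y'))
    (Rmul : ∀ {x y x' y'}, R x y → R x' y' → R (x * x') (y * y'))
    (Rneg : ∀ {x y}, R x y → R (-x) (-y))
    {Φ Φ' Ψ Ψ'} (h : PSRel R Φ Ψ) (hΦ : Φ * Φ' = 1) (hΨ : Ψ * Ψ' = 1)
    {u u'} (hu : u * (PowerSeries.coeff 0) Φ = 1) (hu' : u' * (PowerSeries.coeff 0) Ψ = 1)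
    (huu : R u u') : PSRel R Φ' Ψ' := by
  intro n
  induction n using Nat.strong_induction_on with
  | _ n ih =>
    have eΦ : (PowerSeries.coeff n) Φ' =
        u * ((PowerSeries.coeff n) 1 -
          ∑ i ∈ Finset.range n, (PowerSeries.coeff (i+1)) Φ * (PowerSeries.coeff (n-(i+1))) Φ') := by
      have h1 : (PowerSeries.coeff n) (Φ * Φ') = (PowerSeries.coeff n) 1 := by rw [hΦ]
      rw [PowerSeries.coeff_mul, Finset.Nat.sum_antidiagonal_eq_sum_range_succ_mk,
        Finset.sum_range_succ'] at h1
      simp only [Nat.sub_zero] at h1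
      have h2 := eq_sub_of_add_eq' h1
      calc (PowerSeries.coeff n) Φ' = (u * (PowerSeries.coeff 0) Φ) * (PowerSeries.coeff n) Φ' := by
            rw [hu, one_mul]
        _ = u * ((PowerSeries.coeff 0) Φ * (PowerSeries.coeff n) Φ') := by ring
        _ = _ := by rw [h2]
    have eΨ : (PowerSeries.coeff n) Ψ' =
        u' * ((PowerSeries.coeff n) 1 -
          ∑ i ∈ Finset.range n, (PowerSeries.coeff (i+1)) Ψ * (PowerSeries.coeff (n-(i+1))) Ψ') := by
      have h1 : (PowerSeries.coeff n) (Ψ * Ψ') = (PowerSeries.coeff n) 1 := by rw [hΨ]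
      rw [PowerSeries.coeff_mul, Finset.Nat.sum_antidiagonal_eq_sum_range_succ_mk,
        Finset.sum_range_succ'] at h1
      simp only [Nat.sub_zero] at h1
      have h2 := eq_sub_of_add_eq' h1
      calc (PowerSeries.coeff n) Ψ' = (u' * (PowerSeries.coeff 0) Ψ) * (PowerSeries.coeff n) Ψ' := by
            rw [hu', one_mul]
        _ = u' * ((PowerSeries.coeff 0) Ψ * (PowerSeries.coeff n) Ψ') := by ring
        _ = _ := by rw [h2]
    rw [eΦ, eΨ, sub_eq_add_neg, sub_eq_add_neg]
    refine Rmul huu (Radd (PSRel_one Rzero Rone n) (Rneg (Rsum Rzero Radd (Finset.range n) _ _ ?_)))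
    intro i hi
    exact Rmul (h (i+1)) (ih (n - (i+1)) (by simp only [Finset.mem_range] at hi; omega))

end PSRel



variable {k0 : Type*} [Field k0]

/-- `x` is regular at `t = a` and has value `y` there. -/
def Rel0 (a : k0) (x : RatFunc k0) (y : k0) : Prop :=
  ∃ P Q : Polynomial k0, Q.eval a ≠ 0 ∧ x * algebraMap _ _ Q = algebraMap _ _ P ∧
    P.eval a = y * Q.eval a

variable {a : k0}

theorem Rel0_zero : Rel0 a 0 0 :=
  ⟨0, 1, by simp⟩

theorem Rel0_one : Rel0 a 1 1 :=
  ⟨1, 1, by simp⟩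

theorem Rel0_algebraMap (P : Polynomial k0) : Rel0 a (algebraMap _ _ P) (P.eval a) :=
  ⟨P, 1, by simp⟩

theorem Rel0_add {x y x' y'} (h : Rel0 a x y) (h' : Rel0 a x' y') : Rel0 a (x + x') (y + y') := by
  obtain ⟨P, Q, hQ, hx, hv⟩ := h
  obtain ⟨P', Q', hQ', hx', hv'⟩ := h'
  refine ⟨P * Q' + P' * Q, Q * Q', by simp [hQ, hQ'], ?_, ?_⟩
  · rw [map_add, map_mul, map_mul, map_mul]
    calc (x + x') * (algebraMap _ _ Q * algebraMap _ _ Q')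
        = (x * algebraMap _ _ Q) * algebraMap _ _ Q' + (x' * algebraMap _ _ Q') * algebraMap _ _ Q := by
          ring
      _ = _ := by rw [hx, hx']
  · simp only [eval_add, eval_mul, hv, hv']; ring

theorem Rel0_mul {x y x' y'} (h : Rel0 a x y) (h' : Rel0 a x' y') : Rel0 a (x * x') (y * y') := by
  obtain ⟨P, Q, hQ, hx, hv⟩ := h
  obtain ⟨P', Q', hQ', hx', hv'⟩ := h'
  refine ⟨P * P', Q * Q', by simp [hQ, hQ'], ?_, ?_⟩
  · rw [map_mul, map_mul]
    calc (x * x') * (algebraMap _ _ Q * algebraMap _ _ Q')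
        = (x * algebraMap _ _ Q) * (x' * algebraMap _ _ Q') := by ring
      _ = _ := by rw [hx, hx']
  · simp only [eval_mul, hv, hv']; ring

theorem Rel0_neg {x y} (h : Rel0 a x y) : Rel0 a (-x) (-y) := by
  obtain ⟨P, Q, hQ, hx, hv⟩ := h
  exact ⟨-P, Q, hQ, by rw [neg_mul, hx, map_neg], by rw [eval_neg, hv]; ring⟩

theorem Rel0_inv {x y} (h : Rel0 a x y) (hy : y ≠ 0) : Rel0 a x⁻¹ y⁻¹ := by
  obtain ⟨P, Q, hQ, hx, hv⟩ := h
  have hPa : P.eval a ≠ 0 := by rw [hv]; exact mul_ne_zero hy hQ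
  have hx0 : x ≠ 0 := by
    rintro rfl
    rw [zero_mul] at hx
    have : P = 0 := RatFunc.algebraMap_injective k0 (by rw [← hx, map_zero])
    exact hPa (by simp [this])
  refine ⟨Q, P, hPa, ?_, ?_⟩
  · rw [← hx, ← mul_assoc, inv_mul_cancel₀ hx0, one_mul]
  · rw [hv, ← mul_assoc, inv_mul_cancel₀ hy, one_mul]

theorem Rel0_pow {x y} (h : Rel0 a x y) (N : ℕ) : Rel0 a (x ^ N) (y ^ N) := by
  induction N with
  | zero => simpa using Rel0_one
  | succ N ih => rw [pow_succ, pow_succ]; exact Rel0_mul ih h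

/-- The bridge to `RatFunc.eval` and `denom`. -/
theorem Rel0_eval {x y} (h : Rel0 a x y) :
    x.denom.eval a ≠ 0 ∧ RatFunc.eval (RingHom.id k0) a x = y := by
  obtain ⟨P, Q, hQ, hx, hv⟩ := h
  have hQ0 : Q ≠ 0 := by rintro rfl; simp at hQ
  have hQ0' : algebraMap (Polynomial k0) (RatFunc k0) Q ≠ 0 := RatFunc.algebraMap_ne_zero hQ0
  have hxPQ : x = algebraMap _ _ P / algebraMap _ _ Q := by
    rw [eq_div_iff hQ0', hx]
  have hdvd : x.denom ∣ Q := (RatFunc.denom_dvd hQ0).mpr ⟨P, hxPQ⟩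
  have hde : x.denom.eval a ≠ 0 := by
    obtain ⟨c, hc⟩ := hdvd
    intro h0
    apply hQ
    rw [hc, eval_mul, h0, zero_mul]
  refine ⟨hde, ?_⟩
  have hnum : x.num * Q = P * x.denom := by
    apply RatFunc.algebraMap_injective k0
    rw [map_mul, map_mul]
    have h1 : algebraMap _ (RatFunc k0) x.num = x * algebraMap _ _ x.denom :=
      (div_eq_iff (RatFunc.algebraMap_ne_zero (RatFunc.denom_ne_zero x))).mp
        (RatFunc.num_div_denom x)
    rw [h1, mul_right_comm, hx]
  have hnum' : x.num.eval a * Q.eval a = P.eval a * x.denom.eval a := by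
    rw [← eval_mul, ← eval_mul, hnum]
  rw [RatFunc.eval]
  have he2 : ∀ p : Polynomial k0, Polynomial.eval₂ (RingHom.id k0) a p = p.eval a := fun p => rfl
  rw [he2, he2, div_eq_iff hde]
  have := hv
  -- num.eval a = y * denom.eval a
  have : x.num.eval a * Q.eval a = y * x.denom.eval a * Q.eval a := by
    rw [hnum', hv]; ring
  exact mul_right_cancel₀ hQ this



variable {A : Type*} [CommRing A]

/-- A higher derivation, bundled as a ring hom to power series. -/
def DHom (D : ℕ → A → A) (h1 : ∀ n, D n 1 = if n = 0 then (1 : A) else 0)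
    (hadd : ∀ n x y, D n (x + y) = D n x + D n y)
    (hleib : ∀ n x y, D n (x * y) = ∑ ij ∈ Finset.HasAntidiagonal.antidiagonal n, D ij.1 x * D ij.2 y) :
    A →+* PowerSeries A where
  toFun x := PowerSeries.mk fun n => D n x
  map_one' := by
    ext n
    rw [PowerSeries.coeff_mk, PowerSeries.coeff_one, h1]
  map_mul' x y := by
    ext n
    rw [PowerSeries.coeff_mk, PowerSeries.coeff_mul, hleib]
    exact Finset.sum_congr rfl fun ij _ => by rw [PowerSeries.coeff_mk, PowerSeries.coeff_mk]
  map_zero' := by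
    ext n
    have h := hadd n 0 0
    rw [add_zero] at h
    simp only [PowerSeries.coeff_mk, map_zero]
    exact left_eq_add.mp h
  map_add' x y := by
    ext n
    rw [PowerSeries.coeff_mk, map_add, PowerSeries.coeff_mk, PowerSeries.coeff_mk, hadd]

theorem DHom_coeff (D : ℕ → A → A) (h1) (hadd) (hleib) (x : A) (n : ℕ) :
    PowerSeries.coeff n (DHom D h1 hadd hleib x) = D n x := by
  simp only [DHom, RingHom.coe_mk, MonoidHom.coe_mk, OneHom.coe_mk, PowerSeries.coeff_mk]

theorem sum_reflect {M : Type*} [AddCommMonoid M] (f : ℕ → ℕ → M) (n : ℕ) :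
    ∑ j ∈ Finset.range (n + 1), f j (n - j) = ∑ j ∈ Finset.range (n + 1), f (n - j) j := by
  rw [← Finset.sum_range_reflect]
  refine Finset.sum_congr rfl fun j hj => ?_
  simp only [Finset.mem_range] at hj
  congr 1 <;> omega

section Diag

/-- The diagonal: substitute the inner variable for the outer one. -/
def diag (Φ : PowerSeries (PowerSeries A)) : PowerSeries A :=
  PowerSeries.mk fun n =>
    ∑ ij ∈ Finset.HasAntidiagonal.antidiagonal n, PowerSeries.coeff ij.1 (PowerSeries.coeff ij.2 Φ)

theorem coeff_diag (Φ : PowerSeries (PowerSeries A)) (n : ℕ) :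
    PowerSeries.coeff n (diag Φ) =
      ∑ j ∈ Finset.range (n + 1), PowerSeries.coeff j (PowerSeries.coeff (n - j) Φ) := by
  rw [diag, PowerSeries.coeff_mk, Finset.Nat.sum_antidiagonal_eq_sum_range_succ_mk]

theorem coeff_diag' (Φ : PowerSeries (PowerSeries A)) (n : ℕ) :
    PowerSeries.coeff n (diag Φ) =
      ∑ j ∈ Finset.range (n + 1), PowerSeries.coeff (n - j) (PowerSeries.coeff j Φ) := by
  rw [coeff_diag]
  exact sum_reflect (fun i j => PowerSeries.coeff i (PowerSeries.coeff j Φ)) n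

theorem diag_coe (P : Polynomial (PowerSeries A)) :
    diag (P : PowerSeries (PowerSeries A)) = P.eval PowerSeries.X := by
  ext n
  rw [coeff_diag']
  have hL : ∀ j, PowerSeries.coeff j (P : PowerSeries (PowerSeries A)) =
      P.coeff j := fun j => Polynomial.coeff_coe P j
  simp only [hL]
  rw [Polynomial.eval_eq_sum, Polynomial.sum_def, map_sum]
  have hR : ∀ e, PowerSeries.coeff n (P.coeff e * PowerSeries.X ^ e) =
      if e ≤ n then PowerSeries.coeff (n - e) (P.coeff e) else 0 := fun e =>
    PowerSeries.coeff_mul_X_pow' _ _ _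
  simp only [hR]
  rw [show (∑ j ∈ Finset.range (n + 1), PowerSeries.coeff (n - j) (P.coeff j)) =
      ∑ j ∈ Finset.range (n + 1), if j ≤ n then PowerSeries.coeff (n - j) (P.coeff j) else 0 from
    Finset.sum_congr rfl fun j hj => (if_pos (by simp only [Finset.mem_range] at hj; omega)).symm]
  rw [Finset.sum_subset (Finset.subset_union_left :
      Finset.range (n + 1) ⊆ Finset.range (n + 1) ∪ P.support) ?hz1]
  rw [Finset.sum_subset (Finset.subset_union_right :
      P.support ⊆ Finset.range (n + 1) ∪ P.support) ?hz2]
  case hz1 =>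
    intro e _ he
    rw [if_neg (by simp only [Finset.mem_range] at he; omega)]
  case hz2 =>
    intro e _ he
    rw [Polynomial.notMem_support_iff.mp he, map_zero, ite_self]

theorem diag_one : diag (1 : PowerSeries (PowerSeries A)) = 1 := by
  rw [← Polynomial.coe_one, diag_coe, Polynomial.eval_one]

theorem coeff_diag_trunc (Θ : PowerSeries (PowerSeries A)) {m N : ℕ} (h : m < N) :
    PowerSeries.coeff m (diag ((PowerSeries.trunc N Θ : Polynomial (PowerSeries A)) :
      PowerSeries (PowerSeries A))) = PowerSeries.coeff m (diag Θ) := by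
  rw [coeff_diag, coeff_diag]
  refine Finset.sum_congr rfl fun j hj => ?_
  simp only [Finset.mem_range] at hj
  rw [PowerSeries.coeff_coe_trunc_of_lt (by omega)]

theorem diag_mul (Φ Ψ : PowerSeries (PowerSeries A)) :
    diag (Φ * Ψ) = diag Φ * diag Ψ := by
  ext n
  set N := n + 1 with hN
  calc PowerSeries.coeff n (diag (Φ * Ψ))
      = PowerSeries.coeff n (diag ((PowerSeries.trunc N (Φ * Ψ) : Polynomial (PowerSeries A)) :
          PowerSeries (PowerSeries A))) := (coeff_diag_trunc _ (by omega)).symm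
    _ = PowerSeries.coeff n (diag ((PowerSeries.trunc N
          (((PowerSeries.trunc N Φ : Polynomial (PowerSeries A)) : PowerSeries (PowerSeries A)) *
           ((PowerSeries.trunc N Ψ : Polynomial (PowerSeries A)) : PowerSeries (PowerSeries A))) :
            Polynomial (PowerSeries A)) : PowerSeries (PowerSeries A))) := by
        rw [PowerSeries.trunc_trunc_mul_trunc]
    _ = PowerSeries.coeff n (diag
          (((PowerSeries.trunc N Φ : Polynomial (PowerSeries A)) : PowerSeries (PowerSeries A)) *
           ((PowerSeries.trunc N Ψ : Polynomial (PowerSeries A)) : PowerSeries (PowerSeries A)))) :=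
        coeff_diag_trunc _ (by omega)
    _ = PowerSeries.coeff n (diag ((PowerSeries.trunc N Φ * PowerSeries.trunc N Ψ :
          Polynomial (PowerSeries A)) : PowerSeries (PowerSeries A))) := by
        rw [Polynomial.coe_mul]
    _ = PowerSeries.coeff n ((PowerSeries.trunc N Φ * PowerSeries.trunc N Ψ).eval
          PowerSeries.X) := by rw [diag_coe]
    _ = PowerSeries.coeff n ((PowerSeries.trunc N Φ).eval PowerSeries.X *
          (PowerSeries.trunc N Ψ).eval PowerSeries.X) := by rw [Polynomial.eval_mul]
    _ = PowerSeries.coeff n (diag ((PowerSeries.trunc N Φ : Polynomial (PowerSeries A)) :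
            PowerSeries (PowerSeries A)) *
          diag ((PowerSeries.trunc N Ψ : Polynomial (PowerSeries A)) :
            PowerSeries (PowerSeries A))) := by rw [diag_coe, diag_coe]
    _ = PowerSeries.coeff n (diag Φ * diag Ψ) := by
        rw [PowerSeries.coeff_mul, PowerSeries.coeff_mul]
        refine Finset.sum_congr rfl fun ij hij => ?_
        have hij' := Finset.HasAntidiagonal.mem_antidiagonal.mp hij
        rw [coeff_diag_trunc _ (by omega), coeff_diag_trunc _ (by omega)]

end Diag



section Coeffs

variable {A : Type*} [CommRing A]

theorem coeff_C_add_X_pow (x : A) (N n : ℕ) (hN : N ≠ 0) :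
    PowerSeries.coeff n (PowerSeries.C x + PowerSeries.X ^ N) =
      if n = 0 then x else if n = N then 1 else 0 := by
  rw [map_add, PowerSeries.coeff_C, PowerSeries.coeff_X_pow]
  rcases eq_or_ne n 0 with rfl | h0
  · rw [if_pos rfl, if_pos rfl, if_neg (Ne.symm hN), add_zero]
  · rw [if_neg h0, if_neg h0, zero_add]

theorem coeff_C_sub_X (x : A) (n : ℕ) :
    PowerSeries.coeff n (PowerSeries.C x - PowerSeries.X) =
      if n = 0 then x else if n = 1 then -1 else 0 := by
  rw [map_sub, PowerSeries.coeff_C, PowerSeries.coeff_X]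
  rcases eq_or_ne n 0 with rfl | h0
  · simp
  · rcases eq_or_ne n 1 with rfl | h1
    · simp
    · simp [h0, h1]

theorem coeff_C_sub_X_add_X_pow (x : A) (N n : ℕ) (hN : 2 ≤ N) :
    PowerSeries.coeff n (PowerSeries.C x - PowerSeries.X + PowerSeries.X ^ N) =
      if n = 0 then x else if n = 1 then -1 else if n = N then 1 else 0 := by
  rw [map_add, coeff_C_sub_X, PowerSeries.coeff_X_pow]
  rcases eq_or_ne n 0 with rfl | h0
  · rw [if_pos rfl, if_pos rfl, if_neg (by omega), add_zero]
  · rcases eq_or_ne n 1 with rfl | h1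
    · rw [if_neg h0, if_pos rfl, if_neg h0, if_pos rfl, if_neg (by omega), add_zero]
    · rw [if_neg h0, if_neg h1, if_neg h0, if_neg h1, zero_add]

end Coeffs

section Char

variable {F : Type*} [Field F]

theorem charP_of_card (p e : ℕ) (hp : p.Prime) (he : 0 < e) [Fintype F]
    (hF : Fintype.card F = p ^ e) : CharP F p := by
  have h1 : CharP F (ringChar F) := ringChar.charP F
  have hrp : (ringChar F).Prime := CharP.char_is_prime F (ringChar F)
  obtain ⟨n, hn⟩ := FiniteField.card F (ringChar F)
  have h2 : (ringChar F) ∣ p ^ e := by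
    rw [← hF, hn.2]
    exact dvd_pow_self _ (by exact_mod_cast n.2.ne')
  have h3 : ringChar F = p := by
    have := hrp.dvd_of_dvd_pow h2
    exact ((Nat.prime_dvd_prime_iff_eq hrp hp).mp this)
  rw [← h3]; exact h1

theorem hd_one (R : Type*) [CommSemiring R] (r : ℕ) :
    Polynomial.hasseDeriv r (1 : Polynomial R) = if r = 0 then 1 else 0 := by
  rcases eq_or_ne r 0 with rfl | h0
  · simp [Polynomial.hasseDeriv_zero]
  · rw [if_neg h0, ← Polynomial.C_1, Polynomial.hasseDeriv_C r _ (Nat.pos_of_ne_zero h0)]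

theorem hd_X (R : Type*) [CommSemiring R] (r : ℕ) :
    Polynomial.hasseDeriv r (Polynomial.X : Polynomial R) =
      if r = 0 then Polynomial.X else if r = 1 then 1 else 0 := by
  rcases eq_or_ne r 0 with rfl | h0
  · simp [Polynomial.hasseDeriv_zero]
  · rcases eq_or_ne r 1 with rfl | h1
    · simp [Polynomial.hasseDeriv_one']
    · rw [if_neg h0, if_neg h1]
      exact Polynomial.hasseDeriv_X (k := r) (by omega)

theorem hd_X_pow (p : ℕ) (hp : p.Prime) [CharP F p] {N : ℕ} (hN : ∃ s, 0 < s ∧ N = p ^ s)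
    (r : ℕ) :
    Polynomial.hasseDeriv r (Polynomial.X ^ N : Polynomial F) =
      if r = 0 then Polynomial.X ^ N else if r = N then 1 else 0 := by
  obtain ⟨s, hs, rfl⟩ := hN
  rcases eq_or_ne r 0 with rfl | h0
  · simp [Polynomial.hasseDeriv_zero]
  · rw [Polynomial.X_pow_eq_monomial, Polynomial.hasseDeriv_monomial]
    rcases eq_or_ne r (p ^ s) with rfl | hr
    · rw [if_neg h0, if_pos rfl, Nat.sub_self, Nat.choose_self, Nat.cast_one, one_mul,
        Polynomial.monomial_zero_left, map_one]
    · rw [if_neg h0, if_neg hr]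
      have : ((p ^ s).choose r : F) = 0 := by
        rcases lt_or_ge (p ^ s) r with h | h
        · rw [Nat.choose_eq_zero_of_lt h, Nat.cast_zero]
        · exact (CharP.cast_eq_zero_iff F p _).mpr (hp.dvd_choose_pow h0 hr)
      rw [this, mul_one, Polynomial.monomial_zero_right]

end Char

section HDT

variable {F : Type*} [Field F]

theorem hdt_C (n : ℕ) (g : Polynomial F) :
    hasseDerivTheta F n (Polynomial.C g) = Polynomial.C (Polynomial.hasseDeriv n g) := by
  rw [hasseDerivTheta, Polynomial.sum_C_index (by simp), pow_zero, mul_one]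

theorem hdt_C_mul_X_pow (n : ℕ) (g : Polynomial F) (s : ℕ) :
    hasseDerivTheta F n (Polynomial.C g * Polynomial.X ^ s) =
      Polynomial.C (Polynomial.hasseDeriv n g) * Polynomial.X ^ s := by
  rw [hasseDerivTheta, Polynomial.C_mul_X_pow_eq_monomial,
    Polynomial.sum_monomial_index _ _ (by simp)]

theorem hdt_add (n : ℕ) (f g : Polynomial (Polynomial F)) :
    hasseDerivTheta F n (f + g) = hasseDerivTheta F n f + hasseDerivTheta F n g := by
  rw [hasseDerivTheta, hasseDerivTheta, hasseDerivTheta]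
  exact Polynomial.sum_add_index f g _ (fun i => by simp) (fun i b₁ b₂ => by rw [map_add, map_add, add_mul])

end HDT



section Diag2

variable {A : Type*} [CommRing A]

theorem diag_prod {ι : Type*} (s : Finset ι) (f : ι → PowerSeries (PowerSeries A)) :
    diag (∏ i ∈ s, f i) = ∏ i ∈ s, diag (f i) := by
  classical
  induction s using Finset.induction_on with
  | empty => simpa using diag_one
  | insert _ _ hx ih =>
    rename_i a s
    rw [Finset.prod_insert hx, Finset.prod_insert hx, diag_mul, ih]

theorem diag_C (P : PowerSeries A) : diag (PowerSeries.C P) = P := by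
  rw [show PowerSeries.C P = ((Polynomial.C P : Polynomial (PowerSeries A)) :
      PowerSeries (PowerSeries A)) from (Polynomial.coe_C P).symm, diag_coe, Polynomial.eval_C]

theorem diag_C_add_X_pow (c : PowerSeries A) (N : ℕ) :
    diag (PowerSeries.C c + PowerSeries.X ^ N) = c + PowerSeries.X ^ N := by
  have : (PowerSeries.C c + PowerSeries.X ^ N : PowerSeries (PowerSeries A)) =
      ((Polynomial.C c + Polynomial.X ^ N : Polynomial (PowerSeries A)) :
        PowerSeries (PowerSeries A)) := by
    push_cast
    rfl
  rw [this, diag_coe, Polynomial.eval_add, Polynomial.eval_C, Polynomial.eval_pow,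
    Polynomial.eval_X]

end Diag2

section Elements

variable (F : Type*) [Field F]

def aEl (q i : ℕ) : RatFunc F := (RatFunc.X : RatFunc F) ^ q ^ i - RatFunc.X

def cEl (q i : ℕ) : PowerSeries (RatFunc F) :=
  PowerSeries.C (aEl F q i) - PowerSeries.X

def GG (q M : ℕ) : PowerSeries (PowerSeries (RatFunc F)) :=
  ∏ i ∈ Icc 1 M, (PowerSeries.C (cEl F q i) + PowerSeries.X ^ q ^ i)

def Pz (q M : ℕ) : PowerSeries (RatFunc F) := ∏ i ∈ Icc 1 M, cEl F q i

def WW (q M : ℕ) : PowerSeries (RatFunc F) :=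
  ∏ i ∈ Icc 1 M, (cEl F q i + PowerSeries.X ^ q ^ i)

theorem aEl_ne_zero {q : ℕ} (hq : 2 ≤ q) (i : ℕ) (hi : 1 ≤ i) : aEl F q i ≠ 0 := by
  have h2 : 2 ≤ q ^ i := le_trans hq (Nat.le_self_pow (by omega) q)
  have : (RatFunc.X : RatFunc F) ^ q ^ i - RatFunc.X =
      algebraMap (Polynomial F) (RatFunc F) (Polynomial.X ^ q ^ i - Polynomial.X) := by
    rw [map_sub, map_pow, RatFunc.algebraMap_X]
  rw [aEl, this]
  apply RatFunc.algebraMap_ne_zero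
  intro h
  rw [sub_eq_zero] at h
  have hdeg := congrArg Polynomial.natDegree h
  rw [Polynomial.natDegree_X_pow, Polynomial.natDegree_X] at hdeg
  omega

theorem diag_GG (q M : ℕ) : diag (GG F q M) = WW F q M := by
  rw [GG, diag_prod, WW]
  exact Finset.prod_congr rfl fun i _ => diag_C_add_X_pow _ _

theorem Pz_constantCoeff (q M : ℕ) :
    PowerSeries.constantCoeff (Pz F q M) = ∏ i ∈ Icc 1 M, aEl F q i := by
  rw [Pz, map_prod]
  exact Finset.prod_congr rfl fun i _ => by
    rw [cEl, map_sub, PowerSeries.constantCoeff_C, PowerSeries.constantCoeff_X, sub_zero]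

theorem ladder (q : ℕ) (hq : 2 ≤ q) {m j : ℕ} (hj : j < q ^ (m + 1)) :
    ∀ M, m ≤ M → ∀ {Bm BM : PowerSeries (PowerSeries (RatFunc F))},
      GG F q m * Bm = 1 → GG F q M * BM = 1 →
      Pz F q m * PowerSeries.coeff j Bm = Pz F q M * PowerSeries.coeff j BM := by
  intro M hmM
  induction M, hmM using Nat.le_induction with
  | base =>
    intro Bm BM hBm hBM
    have hGG : GG F q m ≠ 0 := left_ne_zero_of_mul_eq_one hBm
    have : Bm = BM := mul_left_cancel₀ hGG (hBm.trans hBM.symm)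
    rw [this]
  | succ M hmM ih =>
    intro Bm B' hBm hB'
    have hsplit : GG F q (M + 1) = GG F q M *
        (PowerSeries.C (cEl F q (M+1)) + PowerSeries.X ^ q ^ (M+1)) := by
      rw [GG, GG, Finset.prod_Icc_succ_top (by omega)]
    set g : PowerSeries (PowerSeries (RatFunc F)) :=
      PowerSeries.C (cEl F q (M+1)) + PowerSeries.X ^ q ^ (M+1) with hg
    have hBM : GG F q M * (g * B') = 1 := by
      rw [← mul_assoc, ← hsplit, hB']
    have hnle : ¬ (q ^ (M+1) ≤ j) := by
      intro hle
      have h1 : q ^ (m+1) ≤ q ^ (M+1) := Nat.pow_le_pow_right (by omega) (by omega)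
      omega
    have hcoeff : PowerSeries.coeff j (g * B') = cEl F q (M+1) * PowerSeries.coeff j B' := by
      rw [hg, add_mul, map_add, PowerSeries.coeff_C_mul, mul_comm (PowerSeries.X ^ q ^ (M+1)) B',
        PowerSeries.coeff_mul_X_pow', if_neg hnle, add_zero]
    have hPz : Pz F q (M + 1) = Pz F q M * cEl F q (M+1) := by
      rw [Pz, Pz, Finset.prod_Icc_succ_top (by omega)]
    calc Pz F q m * PowerSeries.coeff j Bm
        = Pz F q M * PowerSeries.coeff j (g * B') := ih hBm hBM
      _ = Pz F q M * (cEl F q (M+1) * PowerSeries.coeff j B') := by rw [hcoeff]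
      _ = Pz F q (M + 1) * PowerSeries.coeff j B' := by rw [hPz]; ring

end Elements


end S7

namespace S7

section Assembly

variable (F : Type*) [Field F]

def uEl (q i : ℕ) : RatFunc (RatFunc F) :=
  algebraMap (Polynomial (RatFunc F)) _
    (Polynomial.C ((RatFunc.X : RatFunc F) ^ q ^ i) - Polynomial.X)

def vEl (q m : ℕ) : RatFunc (RatFunc F) :=
  algebraMap (Polynomial (RatFunc F)) _ (Polynomial.C (aEl F q m))

def eEl (q m : ℕ) : RatFunc (RatFunc F) :=
  algebraMap (Polynomial (RatFunc F)) _
    (Polynomial.X ^ q ^ m - Polynomial.C (RatFunc.X : RatFunc F))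

def LpEl (q m : ℕ) : RatFunc (RatFunc F) :=
  algebraMap (Polynomial (RatFunc F)) _
    (∏ i ∈ Icc 1 m, (Polynomial.C ((RatFunc.X : RatFunc F) ^ q ^ i) - Polynomial.X))

theorem LpEl_eq_prod (q m : ℕ) : LpEl F q m = ∏ i ∈ Icc 1 m, uEl F q i := by
  rw [LpEl, map_prod]
  exact Finset.prod_congr rfl fun i _ => rfl

theorem uEl_ne_zero (q i : ℕ) : uEl F q i ≠ 0 := by
  apply RatFunc.algebraMap_ne_zero
  intro h
  have := congrArg (fun P => Polynomial.coeff P 1) h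
  simp only [Polynomial.coeff_sub, Polynomial.coeff_C, Polynomial.coeff_X_one,
    Polynomial.coeff_zero, if_neg (one_ne_zero)] at this
  rw [zero_sub, neg_eq_zero] at this
  exact one_ne_zero this

theorem vEl_ne_zero {q : ℕ} (hq : 2 ≤ q) {m : ℕ} (hm : 1 ≤ m) : vEl F q m ≠ 0 := by
  apply RatFunc.algebraMap_ne_zero
  simpa using aEl_ne_zero F hq m hm

theorem LpEl_ne_zero (q m : ℕ) : LpEl F q m ≠ 0 := by
  rw [LpEl_eq_prod]
  exact Finset.prod_ne_zero_iff.mpr fun i _ => uEl_ne_zero F q i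

theorem Rel0_uEl (q i : ℕ) : Rel0 (RatFunc.X : RatFunc F) (uEl F q i) (aEl F q i) := by
  have h := Rel0_algebraMap (a := (RatFunc.X : RatFunc F))
    (Polynomial.C ((RatFunc.X : RatFunc F) ^ q ^ i) - Polynomial.X)
  rwa [Polynomial.eval_sub, Polynomial.eval_C, Polynomial.eval_X] at h

theorem Rel0_vEl (q m : ℕ) : Rel0 (RatFunc.X : RatFunc F) (vEl F q m) (aEl F q m) := by
  have h := Rel0_algebraMap (a := (RatFunc.X : RatFunc F)) (Polynomial.C (aEl F q m))
  rwa [Polynomial.eval_C] at h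

theorem Rel0_eEl (q m : ℕ) : Rel0 (RatFunc.X : RatFunc F) (eEl F q m) (aEl F q m) := by
  have h := Rel0_algebraMap (a := (RatFunc.X : RatFunc F))
    (Polynomial.X ^ q ^ m - Polynomial.C (RatFunc.X : RatFunc F))
  rwa [Polynomial.eval_sub, Polynomial.eval_pow, Polynomial.eval_C, Polynomial.eval_X] at h

theorem Rel0_prod {k0 : Type*} [Field k0] {a : k0} {ι : Type*} (s : Finset ι)
    (f : ι → RatFunc k0) (g : ι → k0) (h : ∀ i ∈ s, Rel0 a (f i) (g i)) :
    Rel0 a (∏ i ∈ s, f i) (∏ i ∈ s, g i) := by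
  classical
  induction s using Finset.induction_on with
  | empty => simpa using Rel0_one
  | insert _ _ hx ih =>
    rename_i x s
    rw [Finset.prod_insert hx, Finset.prod_insert hx]
    exact Rel0_mul (h x (mem_insert_self x s)) (ih fun i hi => h i (mem_insert_of_mem hi))

theorem Rel0_LpEl (q m : ℕ) :
    Rel0 (RatFunc.X : RatFunc F) (LpEl F q m) (∏ i ∈ Icc 1 m, aEl F q i) := by
  rw [LpEl_eq_prod]
  exact Rel0_prod _ _ _ fun i _ => Rel0_uEl F q i

-- embPoly translations
theorem embPoly_u (N : ℕ) :
    embPoly F (Polynomial.C (Polynomial.X ^ N) - Polynomial.X) =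
      algebraMap (Polynomial (RatFunc F)) _
        (Polynomial.C ((RatFunc.X : RatFunc F) ^ N) - Polynomial.X) := by
  rw [embPoly, RingHom.comp_apply]
  congr 1
  rw [Polynomial.coe_mapRingHom, Polynomial.map_sub, Polynomial.map_C, Polynomial.map_X,
    map_pow, RatFunc.algebraMap_X]

theorem embPoly_v (N : ℕ) :
    embPoly F (Polynomial.C (Polynomial.X ^ N - Polynomial.X)) =
      algebraMap (Polynomial (RatFunc F)) _
        (Polynomial.C ((RatFunc.X : RatFunc F) ^ N - RatFunc.X)) := by
  rw [embPoly, RingHom.comp_apply]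
  congr 1
  rw [Polynomial.coe_mapRingHom, Polynomial.map_C, map_sub, map_pow, RatFunc.algebraMap_X]

theorem embPoly_e (N : ℕ) :
    embPoly F (Polynomial.X ^ N - Polynomial.C Polynomial.X) =
      algebraMap (Polynomial (RatFunc F)) _
        (Polynomial.X ^ N - Polynomial.C (RatFunc.X : RatFunc F)) := by
  rw [embPoly, RingHom.comp_apply]
  congr 1
  rw [Polynomial.coe_mapRingHom, Polynomial.map_sub, Polynomial.map_pow, Polynomial.map_X,
    Polynomial.map_C, RatFunc.algebraMap_X]

theorem embPoly_one_ : embPoly F 1 = 1 := map_one _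

-- hasseDerivTheta on the generators
theorem hdt_u (p : ℕ) (hp : p.Prime) [CharP F p] {N : ℕ} (hN : ∃ s, 0 < s ∧ N = p ^ s) (r : ℕ) :
    hasseDerivTheta F r (Polynomial.C (Polynomial.X ^ N) - Polynomial.X) =
      if r = 0 then Polynomial.C (Polynomial.X ^ N : Polynomial F) - Polynomial.X
      else if r = N then 1 else 0 := by
  have hN2 : 2 ≤ N := by
    obtain ⟨s, hs, rfl⟩ := hN
    calc 2 ≤ p := hp.two_le
      _ ≤ p ^ s := Nat.le_self_pow (by omega) p
  have hsub : Polynomial.C (Polynomial.X ^ N : Polynomial F) - Polynomial.X =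
      Polynomial.C (Polynomial.X ^ N : Polynomial F) +
        Polynomial.C (-1 : Polynomial F) * Polynomial.X ^ 1 := by
    rw [map_neg, map_one]; ring
  rw [hsub, hdt_add, hdt_C, hdt_C_mul_X_pow, hd_X_pow p hp hN, map_neg, hd_one F r]
  rcases eq_or_ne r 0 with rfl | h0
  · rw [if_pos rfl, if_pos rfl, if_pos rfl, ← hsub]
  · rw [if_neg h0, if_neg h0, if_neg h0, map_neg, map_zero, neg_zero, zero_mul, add_zero]
    rcases eq_or_ne r N with rfl | hrN
    · rw [if_pos rfl, if_pos rfl, map_one]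
    · rw [if_neg hrN, if_neg hrN, map_zero]

theorem hdt_v (p : ℕ) (hp : p.Prime) [CharP F p] {N : ℕ} (hN : ∃ s, 0 < s ∧ N = p ^ s) (r : ℕ) :
    hasseDerivTheta F r (Polynomial.C (Polynomial.X ^ N - Polynomial.X : Polynomial F)) =
      if r = 0 then Polynomial.C (Polynomial.X ^ N - Polynomial.X : Polynomial F)
      else if r = 1 then -1 else if r = N then 1 else 0 := by
  have hN2 : 2 ≤ N := by
    obtain ⟨s, hs, rfl⟩ := hN
    calc 2 ≤ p := hp.two_le
      _ ≤ p ^ s := Nat.le_self_pow (by omega) p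
  rw [hdt_C, map_sub, hd_X_pow p hp hN, hd_X]
  rcases eq_or_ne r 0 with rfl | h0
  · rw [if_pos rfl, if_pos rfl, if_pos rfl, map_sub]
  · rcases eq_or_ne r 1 with rfl | h1
    · rw [if_neg h0, if_neg h0, if_pos rfl, if_neg (by omega : ¬(1 : ℕ) = N), if_neg h0,
        if_pos rfl, zero_sub, map_neg, map_one]
    · rcases eq_or_ne r N with rfl | hrN
      · rw [if_neg h0, if_pos rfl, if_neg h0, if_neg h1, sub_zero, map_one, if_neg h0, if_neg h1,
          if_pos rfl]
      · rw [if_neg h0, if_neg hrN, if_neg h0, if_neg h1, if_neg h0, if_neg h1, if_neg hrN,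
          sub_zero, map_zero]

theorem hdt_e (N : ℕ) (r : ℕ) :
    hasseDerivTheta F r (Polynomial.X ^ N - Polynomial.C Polynomial.X) =
      if r = 0 then (Polynomial.X ^ N - Polynomial.C (Polynomial.X : Polynomial F))
      else if r = 1 then -1 else 0 := by
  have hsub : (Polynomial.X ^ N - Polynomial.C (Polynomial.X : Polynomial F)) =
      Polynomial.C (-(Polynomial.X : Polynomial F)) +
        Polynomial.C (1 : Polynomial F) * Polynomial.X ^ N := by
    rw [map_neg, map_one, one_mul]; ring
  rw [hsub, hdt_add, hdt_C, hdt_C_mul_X_pow, map_neg, hd_X, hd_one F r]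
  rcases eq_or_ne r 0 with rfl | h0
  · rw [if_pos rfl, if_pos rfl, if_pos rfl, ← hsub]
  · rw [if_neg h0, if_neg h0, map_zero, zero_mul, add_zero]
    rcases eq_or_ne r 1 with rfl | h1
    · rw [if_pos rfl, map_neg, map_one, if_neg h0, if_pos rfl]
    · rw [if_neg h1, neg_zero, map_zero, if_neg h0, if_neg h1]

end Assembly

end S7

namespace S7

theorem PSRel_neg {A B : Type*} [CommRing A] [CommRing B] {R : A → B → Prop}
    (Rneg : ∀ {x y}, R x y → R (-x) (-y)) {Φ Ψ} (h : PSRel R Φ Ψ) : PSRel R (-Φ) (-Ψ) := by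
  intro n; rw [map_neg, map_neg]; exact Rneg (h n)

section Rel1

variable {k0 : Type*} [Field k0] {a : k0}

theorem Rel1_C_sub_X {x y} (h : Rel0 a x y) :
    PSRel (Rel0 a) (PowerSeries.C x - PowerSeries.X) (PowerSeries.C y - PowerSeries.X) := by
  intro n
  rw [coeff_C_sub_X, coeff_C_sub_X]
  split_ifs
  · exact h
  · exact Rel0_neg Rel0_one
  · exact Rel0_zero

theorem Rel1_C_add_X_pow {x y} (h : Rel0 a x y) {N : ℕ} (hN : N ≠ 0) :
    PSRel (Rel0 a) (PowerSeries.C x + PowerSeries.X ^ N)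
      (PowerSeries.C y + PowerSeries.X ^ N) := by
  intro n
  rw [coeff_C_add_X_pow _ _ _ hN, coeff_C_add_X_pow _ _ _ hN]
  split_ifs
  · exact h
  · exact Rel0_one
  · exact Rel0_zero

theorem Rel1_C_sub_X_add_X_pow {x y} (h : Rel0 a x y) {N : ℕ} (hN : 2 ≤ N) :
    PSRel (Rel0 a) (PowerSeries.C x - PowerSeries.X + PowerSeries.X ^ N)
      (PowerSeries.C y - PowerSeries.X + PowerSeries.X ^ N) := by
  intro n
  rw [coeff_C_sub_X_add_X_pow _ _ _ hN, coeff_C_sub_X_add_X_pow _ _ _ hN]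
  split_ifs
  · exact h
  · exact Rel0_neg Rel0_one
  · exact Rel0_one
  · exact Rel0_zero

end Rel1

section Assembly2

variable (F : Type*) [Field F]

theorem GG_constantCoeff {q : ℕ} (hq : 1 ≤ q) (M : ℕ) :
    PowerSeries.constantCoeff (GG F q M) = Pz F q M := by
  rw [GG, map_prod, Pz]
  refine Finset.prod_congr rfl fun i _ => ?_
  rw [map_add, PowerSeries.constantCoeff_C, map_pow, PowerSeries.constantCoeff_X,
    zero_pow (by positivity), add_zero]

theorem hd_C_sub_X {R : Type*} [CommRing R] (x : R) (r : ℕ) :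
    Polynomial.hasseDeriv r (Polynomial.C x - Polynomial.X) =
      if r = 0 then Polynomial.C x - Polynomial.X else if r = 1 then -1 else 0 := by
  rw [map_sub, hd_X]
  rcases eq_or_ne r 0 with rfl | h0
  · rw [if_pos rfl, if_pos rfl, Polynomial.hasseDeriv_zero, LinearMap.id_apply]
  · rw [if_neg h0, if_neg h0, Polynomial.hasseDeriv_C r _ (Nat.pos_of_ne_zero h0)]
    rcases eq_or_ne r 1 with rfl | h1
    · rw [if_pos rfl, if_pos rfl, zero_sub]
    · rw [if_neg h1, if_neg h1, zero_sub, neg_zero]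

-- θ-side expansions
theorem Eseries_u (E : RatFunc (RatFunc F) →+* PowerSeries (RatFunc (RatFunc F)))
    (hE : ∀ g r, PowerSeries.coeff r (E (embPoly F g)) = embPoly F (hasseDerivTheta F r g))
    (p : ℕ) (hp : p.Prime) [CharP F p] {q i : ℕ} (hN : ∃ s, 0 < s ∧ q ^ i = p ^ s) :
    E (uEl F q i) = PowerSeries.C (uEl F q i) + PowerSeries.X ^ q ^ i := by
  have hN0 : q ^ i ≠ 0 := by
    obtain ⟨s, hs, hqs⟩ := hN; rw [hqs]; exact pow_ne_zero _ hp.pos.ne'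
  have hu : uEl F q i = embPoly F (Polynomial.C (Polynomial.X ^ q ^ i) - Polynomial.X) :=
    (embPoly_u F (q ^ i)).symm
  ext r
  rw [hu, hE, hdt_u F p hp hN, coeff_C_add_X_pow _ _ _ hN0]
  rcases eq_or_ne r 0 with rfl | h0
  · rw [if_pos rfl, if_pos rfl, ← hu]
  · rw [if_neg h0, if_neg h0]
    rcases eq_or_ne r (q ^ i) with rfl | hrN
    · rw [if_pos rfl, if_pos rfl, map_one]
    · rw [if_neg hrN, if_neg hrN, map_zero]

theorem Eseries_v (E : RatFunc (RatFunc F) →+* PowerSeries (RatFunc (RatFunc F)))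
    (hE : ∀ g r, PowerSeries.coeff r (E (embPoly F g)) = embPoly F (hasseDerivTheta F r g))
    (p : ℕ) (hp : p.Prime) [CharP F p] {q m : ℕ} (hN : ∃ s, 0 < s ∧ q ^ m = p ^ s) :
    E (vEl F q m) = PowerSeries.C (vEl F q m) - PowerSeries.X + PowerSeries.X ^ q ^ m := by
  have hN2 : 2 ≤ q ^ m := by
    obtain ⟨s, hs, hqs⟩ := hN
    rw [hqs]
    calc 2 ≤ p := hp.two_le
      _ ≤ p ^ s := Nat.le_self_pow (by omega) p
  have hu : vEl F q m = embPoly F (Polynomial.C (Polynomial.X ^ q ^ m - Polynomial.X)) :=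
    (embPoly_v F (q ^ m)).symm
  ext r
  rw [hu, hE, hdt_v F p hp hN, coeff_C_sub_X_add_X_pow _ _ _ hN2]
  rcases eq_or_ne r 0 with rfl | h0
  · rw [if_pos rfl, if_pos rfl, ← hu]
  · rcases eq_or_ne r 1 with rfl | h1
    · rw [if_neg h0, if_pos rfl, if_neg h0, if_pos rfl, map_neg, map_one]
    · rw [if_neg h0, if_neg h1, if_neg h0, if_neg h1]
      rcases eq_or_ne r (q ^ m) with rfl | hrN
      · rw [if_pos rfl, if_pos rfl, map_one]
      · rw [if_neg hrN, if_neg hrN, map_zero]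

theorem Eseries_e (E : RatFunc (RatFunc F) →+* PowerSeries (RatFunc (RatFunc F)))
    (hE : ∀ g r, PowerSeries.coeff r (E (embPoly F g)) = embPoly F (hasseDerivTheta F r g))
    (q m : ℕ) :
    E (eEl F q m) = PowerSeries.C (eEl F q m) - PowerSeries.X := by
  have hu : eEl F q m = embPoly F (Polynomial.X ^ q ^ m - Polynomial.C Polynomial.X) :=
    (embPoly_e F (q ^ m)).symm
  ext r
  rw [hu, hE, hdt_e F (q ^ m), coeff_C_sub_X]
  rcases eq_or_ne r 0 with rfl | h0
  · rw [if_pos rfl, if_pos rfl, ← hu]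
  · rcases eq_or_ne r 1 with rfl | h1
    · rw [if_neg h0, if_pos rfl, if_neg h0, if_pos rfl, map_neg, map_one]
    · rw [if_neg h0, if_neg h1, if_neg h0, if_neg h1, map_zero]

-- t-side expansion
theorem Etseries_u (E : RatFunc (RatFunc F) →+* PowerSeries (RatFunc (RatFunc F)))
    (hE : ∀ g r, PowerSeries.coeff r (E (embPoly F g)) =
      embPoly F (Polynomial.hasseDeriv r g)) (q i : ℕ) :
    E (uEl F q i) = PowerSeries.C (uEl F q i) - PowerSeries.X := by
  have hu : uEl F q i = embPoly F (Polynomial.C (Polynomial.X ^ q ^ i) - Polynomial.X) :=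
    (embPoly_u F (q ^ i)).symm
  ext r
  rw [hu, hE, hd_C_sub_X, coeff_C_sub_X]
  rcases eq_or_ne r 0 with rfl | h0
  · rw [if_pos rfl, if_pos rfl, ← hu]
  · rcases eq_or_ne r 1 with rfl | h1
    · rw [if_neg h0, if_pos rfl, if_neg h0, if_pos rfl, map_neg, map_one]
    · rw [if_neg h0, if_neg h1, if_neg h0, if_neg h1, map_zero]

theorem etaPoly_emb (q M : ℕ) :
    algebraMap (Polynomial (RatFunc F)) (RatFunc (RatFunc F)) (etaPoly F q M) =
      ∏ m ∈ Icc 1 M, ((vEl F q m)⁻¹ * eEl F q m) := by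
  rw [etaPoly, map_prod]
  refine Finset.prod_congr rfl fun m _ => ?_
  rw [map_mul]
  congr 1
  have hφ : algebraMap (Polynomial (RatFunc F)) (RatFunc (RatFunc F))
        (Polynomial.C (((RatFunc.X : RatFunc F) ^ q ^ m - RatFunc.X)⁻¹)) =
      ((algebraMap (Polynomial (RatFunc F)) (RatFunc (RatFunc F))).comp
        (Polynomial.C : RatFunc F →+* Polynomial (RatFunc F)))
        (((RatFunc.X : RatFunc F) ^ q ^ m - RatFunc.X)⁻¹) := rfl
  rw [hφ, map_inv₀]
  rfl

end Assembly2

end S7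

namespace S7

section GenRel

variable {A B : Type*} [CommRing A] [CommRing B] {R : A → B → Prop}

theorem cEl_eq (F : Type*) [Field F] (q i : ℕ) :
    cEl F q i = PowerSeries.C (aEl F q i) - PowerSeries.X := rfl

theorem PSRel_C_sub_X' (Rzero : R 0 0) (Rone : R 1 1)
    (Rneg : ∀ {x y}, R x y → R (-x) (-y)) {x y} (h : R x y) :
    PSRel R (PowerSeries.C x - PowerSeries.X) (PowerSeries.C y - PowerSeries.X) := by
  intro n
  rw [coeff_C_sub_X, coeff_C_sub_X]
  split_ifs
  · exact h
  · exact Rneg Rone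
  · exact Rzero

theorem PSRel_C_add_X_pow' (Rzero : R 0 0) (Rone : R 1 1) {x y} (h : R x y) {N : ℕ}
    (hN : N ≠ 0) :
    PSRel R (PowerSeries.C x + PowerSeries.X ^ N)
      (PowerSeries.C y + PowerSeries.X ^ N) := by
  intro n
  rw [coeff_C_add_X_pow _ _ _ hN, coeff_C_add_X_pow _ _ _ hN]
  split_ifs
  · exact h
  · exact Rone
  · exact Rzero

theorem PSRel_C_sub_X_add_X_pow' (Rzero : R 0 0) (Rone : R 1 1)
    (Rneg : ∀ {x y}, R x y → R (-x) (-y)) {x y} (h : R x y) {N : ℕ} (hN : 2 ≤ N) :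
    PSRel R (PowerSeries.C x - PowerSeries.X + PowerSeries.X ^ N)
      (PowerSeries.C y - PowerSeries.X + PowerSeries.X ^ N) := by
  intro n
  rw [coeff_C_sub_X_add_X_pow _ _ _ hN, coeff_C_sub_X_add_X_pow _ _ _ hN]
  split_ifs
  · exact h
  · exact Rneg Rone
  · exact Rone
  · exact Rzero

end GenRel

end S7

/-- Let `n ≥ 1` and `q^l ≥ n`. With `b_0 = 1` and, for `j > 0`,
`b_j = ∏_{i=1}^{l_j−1}(θ^{q^i} − t) · ∂_θ^{(j)}( ∏_{i=1}^{l_j−1}(θ^{q^i} − t)^{−1} )`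
(`l_j = ⌊log_q j⌋ + 1`), one has for every `0 ≤ k < n`:
`Σ_{i+j=k} (∂_t^{(i)}(b_j))|_{t=θ} = (∂_θ^{(k)}(η_{l−1}))|_{t=θ}`, all rational
functions involved being regular at `t = θ`. Here `(∂_θ^{(n)})` and `(∂_t^{(n)})` are the
unique higher derivations on `𝔽_q(θ,t)` (𝔽_q-linear, identity in degree `0`, Leibniz rule)
restricting to the Hasse derivatives with respect to `θ` resp. `t` on `𝔽_q[θ,t]`. -/
theorem sum_hasseDeriv_b_eval_eq_hasseDeriv_eta
    (p e q : ℕ) (hp : p.Prime) (he : 0 < e) (hq : q = p ^ e)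
    [Fintype F] (hF : Fintype.card F = q)
    (Dθ Dt : ℕ → RatFunc (RatFunc F) → RatFunc (RatFunc F))
    (hDθ0 : Dθ 0 = id)
    (hDθadd : ∀ n x y, Dθ n (x + y) = Dθ n x + Dθ n y)
    (hDθsmul : ∀ n (c : F) x,
      Dθ n (embPoly F (Polynomial.C (Polynomial.C c)) * x)
        = embPoly F (Polynomial.C (Polynomial.C c)) * Dθ n x)
    (hDθleib : ∀ n x y,
      Dθ n (x * y) = ∑ ij ∈ Finset.HasAntidiagonal.antidiagonal n, Dθ ij.1 x * Dθ ij.2 y)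
    (hDθpoly : ∀ n f, Dθ n (embPoly F f) = embPoly F (hasseDerivTheta F n f))
    (hDt0 : Dt 0 = id)
    (hDtadd : ∀ n x y, Dt n (x + y) = Dt n x + Dt n y)
    (hDtsmul : ∀ n (c : F) x,
      Dt n (embPoly F (Polynomial.C (Polynomial.C c)) * x)
        = embPoly F (Polynomial.C (Polynomial.C c)) * Dt n x)
    (hDtleib : ∀ n x y,
      Dt n (x * y) = ∑ ij ∈ Finset.HasAntidiagonal.antidiagonal n, Dt ij.1 x * Dt ij.2 y)
    (hDtpoly : ∀ n f, Dt n (embPoly F f) = embPoly F (Polynomial.hasseDeriv n f))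
    (b : ℕ → RatFunc (RatFunc F))
    (hb0 : b 0 = 1)
    (hbj : ∀ j, 0 < j → b j = Lprod F q j * Dθ j (Lprod F q j)⁻¹)
    (n l : ℕ) (hn : 1 ≤ n) (hl : n ≤ q ^ l)
    (k : ℕ) (hk : k < n) :
    (∀ ij ∈ Finset.HasAntidiagonal.antidiagonal k,
      (Dt ij.1 (b ij.2)).denom.eval (RatFunc.X : RatFunc F) ≠ 0) ∧
    (Dθ k (algebraMap (Polynomial (RatFunc F)) (RatFunc (RatFunc F))
        (etaPoly F q (l - 1)))).denom.eval (RatFunc.X : RatFunc F) ≠ 0 ∧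
    (∑ ij ∈ Finset.HasAntidiagonal.antidiagonal k,
        RatFunc.eval (RingHom.id (RatFunc F)) (RatFunc.X : RatFunc F) (Dt ij.1 (b ij.2)))
      = RatFunc.eval (RingHom.id (RatFunc F)) (RatFunc.X : RatFunc F)
          (Dθ k (algebraMap (Polynomial (RatFunc F)) (RatFunc (RatFunc F))
            (etaPoly F q (l - 1)))) := by
  classical
  haveI : CharP F p := S7.charP_of_card p e hp he (hq ▸ hF)
  have hq2 : 2 ≤ q := by
    rw [hq]
    calc 2 ≤ p := hp.two_le
      _ ≤ p ^ e := Nat.le_self_pow (by omega) p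
  have hpow : ∀ i, 1 ≤ i → ∃ s, 0 < s ∧ q ^ i = p ^ s := fun i hi =>
    ⟨e * i, by positivity, by rw [hq, pow_mul]⟩
  set pt : RatFunc F := RatFunc.X with hpt
  -- step 1: the higher derivations as ring homs into power series
  have h1θ : ∀ n, Dθ n 1 = if n = 0 then (1 : RatFunc (RatFunc F)) else 0 := by
    intro n
    have h := hDθpoly n 1
    rw [map_one] at h
    rw [h, show (1 : Polynomial (Polynomial F)) = Polynomial.C 1 from (map_one _).symm,
      S7.hdt_C, S7.hd_one]
    split_ifs <;> simp
  have h1t : ∀ n, Dt n 1 = if n = 0 then (1 : RatFunc (RatFunc F)) else 0 := by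
    intro n
    have h := hDtpoly n 1
    rw [map_one] at h
    rw [h, S7.hd_one]
    split_ifs <;> simp
  set Eθ : RatFunc (RatFunc F) →+* PowerSeries (RatFunc (RatFunc F)) :=
    S7.DHom Dθ h1θ hDθadd hDθleib with hEθdef
  set Et : RatFunc (RatFunc F) →+* PowerSeries (RatFunc (RatFunc F)) :=
    S7.DHom Dt h1t hDtadd hDtleib with hEtdef
  have hDθc : ∀ x r, PowerSeries.coeff r (Eθ x) = Dθ r x := fun x r =>
    S7.DHom_coeff Dθ h1θ hDθadd hDθleib x r
  have hDtc : ∀ x r, PowerSeries.coeff r (Et x) = Dt r x := fun x r =>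
    S7.DHom_coeff Dt h1t hDtadd hDtleib x r
  have hEθpoly : ∀ g r, PowerSeries.coeff r (Eθ (embPoly F g)) =
      embPoly F (hasseDerivTheta F r g) := fun g r => by rw [hDθc, hDθpoly]
  have hEtpoly : ∀ g r, PowerSeries.coeff r (Et (embPoly F g)) =
      embPoly F (Polynomial.hasseDeriv r g) := fun g r => by rw [hDtc, hDtpoly]
  -- step 2: expansions of the generators
  have hEθu : ∀ i, 1 ≤ i → Eθ (S7.uEl F q i) =
      PowerSeries.C (S7.uEl F q i) + PowerSeries.X ^ q ^ i := fun i hi =>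
    S7.Eseries_u F Eθ hEθpoly p hp (hpow i hi)
  have hEtu : ∀ i, Et (S7.uEl F q i) =
      PowerSeries.C (S7.uEl F q i) - PowerSeries.X := fun i =>
    S7.Etseries_u F Et hEtpoly q i
  have hEθv : ∀ m, 1 ≤ m → Eθ (S7.vEl F q m) =
      PowerSeries.C (S7.vEl F q m) - PowerSeries.X + PowerSeries.X ^ q ^ m := fun m hm =>
    S7.Eseries_v F Eθ hEθpoly p hp (hpow m hm)
  have hEθe : ∀ m, Eθ (S7.eEl F q m) =
      PowerSeries.C (S7.eEl F q m) - PowerSeries.X := fun m =>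
    S7.Eseries_e F Eθ hEθpoly q m
  -- step 3: products over Icc
  have hEθLp : ∀ m, Eθ (S7.LpEl F q m) =
      ∏ i ∈ Icc 1 m, (PowerSeries.C (S7.uEl F q i) + PowerSeries.X ^ q ^ i) := by
    intro m
    rw [S7.LpEl_eq_prod, map_prod]
    exact Finset.prod_congr rfl fun i hi => hEθu i (Finset.mem_Icc.mp hi).1
  have hEtLp : ∀ m, Et (S7.LpEl F q m) =
      ∏ i ∈ Icc 1 m, (PowerSeries.C (S7.uEl F q i) - PowerSeries.X) := by
    intro m
    rw [S7.LpEl_eq_prod, map_prod]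
    exact Finset.prod_congr rfl fun i _ => hEtu i
  have hLpinv : ∀ m, S7.LpEl F q m * (S7.LpEl F q m)⁻¹ = 1 := fun m =>
    mul_inv_cancel₀ (S7.LpEl_ne_zero F q m)
  have hEθLpinv : ∀ m, Eθ (S7.LpEl F q m) * Eθ ((S7.LpEl F q m)⁻¹) = 1 := fun m => by
    rw [← map_mul, hLpinv, map_one]
  -- step 4: the power-series-side units and inverses
  have haprod : ∀ m, (∏ i ∈ Icc 1 m, S7.aEl F q i) ≠ 0 := fun m =>
    Finset.prod_ne_zero_iff.mpr fun i hi => S7.aEl_ne_zero F hq2 i (Finset.mem_Icc.mp hi).1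
  have hPzU : ∀ m, IsUnit (S7.Pz F q m) := fun m =>
    PowerSeries.isUnit_iff_constantCoeff.mpr (by
      rw [S7.Pz_constantCoeff]
      exact isUnit_iff_ne_zero.mpr (haprod m))
  set BB : ℕ → PowerSeries (PowerSeries (RatFunc F)) := fun m =>
    PowerSeries.invOfUnit (S7.GG F q m) (hPzU m).unit with hBBdef
  have hGGBB : ∀ m, S7.GG F q m * BB m = 1 := fun m =>
    PowerSeries.mul_invOfUnit _ _ (by
      rw [S7.GG_constantCoeff F (by omega) m]
      exact ((hPzU m).unit_spec).symm)
  set PzI : ℕ → PowerSeries (RatFunc F) := fun m =>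
    PowerSeries.invOfUnit (S7.Pz F q m) (isUnit_iff_ne_zero.mpr (haprod m)).unit with hPzIdef
  have hPzPzI : ∀ m, S7.Pz F q m * PzI m = 1 := fun m =>
    PowerSeries.mul_invOfUnit _ _ (by
      rw [S7.Pz_constantCoeff]
      exact ((isUnit_iff_ne_zero.mpr (haprod m)).unit_spec).symm)
  -- step 5: level-1 relations
  have R1zero : S7.PSRel (S7.Rel0 pt) 0 0 := fun n => by
    rw [map_zero, map_zero]; exact S7.Rel0_zero
  have R1one : S7.PSRel (S7.Rel0 pt) 1 1 := S7.PSRel_one S7.Rel0_zero S7.Rel0_one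
  have hRel1EtLp : ∀ m, S7.PSRel (S7.Rel0 pt) (Et (S7.LpEl F q m)) (S7.Pz F q m) := by
    intro m
    rw [hEtLp, S7.Pz]
    refine S7.PSRel_prod S7.Rel0_zero S7.Rel0_one S7.Rel0_add S7.Rel0_mul _ _ _ fun i _ => ?_
    rw [S7.cEl_eq]
    exact S7.PSRel_C_sub_X' S7.Rel0_zero S7.Rel0_one S7.Rel0_neg (S7.Rel0_uEl F q i)
  have hcoeff0EtLp : ∀ m, PowerSeries.coeff 0 (Et (S7.LpEl F q m)) = S7.LpEl F q m := by
    intro m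
    rw [hDtc, hDt0, id_eq]
  have hcoeff0Pz : ∀ m, PowerSeries.coeff 0 (S7.Pz F q m) =
      ∏ i ∈ Icc 1 m, S7.aEl F q i := by
    intro m
    rw [PowerSeries.coeff_zero_eq_constantCoeff, S7.Pz_constantCoeff]
  have hRel1EtLpinv : ∀ m, S7.PSRel (S7.Rel0 pt) (Et ((S7.LpEl F q m)⁻¹)) (PzI m) := by
    intro m
    refine S7.PSRel_inv S7.Rel0_zero S7.Rel0_one S7.Rel0_add S7.Rel0_mul S7.Rel0_neg
      (hRel1EtLp m) (by rw [← map_mul, hLpinv, map_one]) (hPzPzI m)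
      (u := (S7.LpEl F q m)⁻¹) (u' := (∏ i ∈ Icc 1 m, S7.aEl F q i)⁻¹) ?_ ?_ ?_
    · rw [hcoeff0EtLp, inv_mul_cancel₀ (S7.LpEl_ne_zero F q m)]
    · rw [hcoeff0Pz, inv_mul_cancel₀ (haprod m)]
    · exact S7.Rel0_inv (S7.Rel0_LpEl F q m) (haprod m)
  -- step 6: level-2 relations
  have hmapEtEθLp : ∀ m, PowerSeries.map Et (Eθ (S7.LpEl F q m)) =
      ∏ i ∈ Icc 1 m, (PowerSeries.C (PowerSeries.C (S7.uEl F q i) - PowerSeries.X) +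
        PowerSeries.X ^ q ^ i) := by
    intro m
    rw [hEθLp, map_prod]
    refine Finset.prod_congr rfl fun i _ => ?_
    rw [map_add, PowerSeries.map_C, map_pow, PowerSeries.map_X, hEtu]
  have hmapinv : ∀ m, (∏ i ∈ Icc 1 m,
      (PowerSeries.C (PowerSeries.C (S7.uEl F q i) - PowerSeries.X) +
        PowerSeries.X ^ q ^ i)) * PowerSeries.map Et (Eθ ((S7.LpEl F q m)⁻¹)) = 1 := by
    intro m
    rw [← hmapEtEθLp, ← map_mul, hEθLpinv, map_one]
  have hRel2GG : ∀ m, S7.PSRel (S7.PSRel (S7.Rel0 pt)) (∏ i ∈ Icc 1 m,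
      (PowerSeries.C (PowerSeries.C (S7.uEl F q i) - PowerSeries.X) +
        PowerSeries.X ^ q ^ i)) (S7.GG F q m) := by
    intro m
    rw [S7.GG]
    refine S7.PSRel_prod R1zero R1one (S7.PSRel_add S7.Rel0_add)
      (S7.PSRel_mul S7.Rel0_zero S7.Rel0_add S7.Rel0_mul) _ _ _ fun i hi => ?_
    rw [S7.cEl_eq]
    refine S7.PSRel_C_add_X_pow' R1zero R1one ?_ (by positivity)
    exact S7.PSRel_C_sub_X' S7.Rel0_zero S7.Rel0_one S7.Rel0_neg (S7.Rel0_uEl F q i)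
  have hcoeff0map : ∀ m, PowerSeries.coeff 0 (∏ i ∈ Icc 1 m,
      (PowerSeries.C (PowerSeries.C (S7.uEl F q i) - PowerSeries.X) +
        PowerSeries.X ^ q ^ i)) = Et (S7.LpEl F q m) := by
    intro m
    rw [← hmapEtEθLp, PowerSeries.coeff_map, hDθc, hDθ0, id_eq]
  have hcoeff0GG : ∀ m, PowerSeries.coeff 0 (S7.GG F q m) = S7.Pz F q m := by
    intro m
    rw [PowerSeries.coeff_zero_eq_constantCoeff, S7.GG_constantCoeff F (by omega) m]
  have hRel2BB : ∀ m, S7.PSRel (S7.PSRel (S7.Rel0 pt))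
      (PowerSeries.map Et (Eθ ((S7.LpEl F q m)⁻¹))) (BB m) := by
    intro m
    refine S7.PSRel_inv R1zero R1one (S7.PSRel_add S7.Rel0_add)
      (S7.PSRel_mul S7.Rel0_zero S7.Rel0_add S7.Rel0_mul) (S7.PSRel_neg S7.Rel0_neg)
      (hRel2GG m) (hmapinv m) (hGGBB m)
      (u := Et ((S7.LpEl F q m)⁻¹)) (u' := PzI m) ?_ ?_ (hRel1EtLpinv m)
    · rw [hcoeff0map, ← map_mul, inv_mul_cancel₀ (S7.LpEl_ne_zero F q m), map_one]
    · rw [hcoeff0GG, mul_comm, hPzPzI]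
  -- step 7: the b_j
  have hbrk : ∀ j, b j = S7.LpEl F q (Nat.log q j) *
      Dθ j ((S7.LpEl F q (Nat.log q j))⁻¹) := by
    intro j
    rcases Nat.eq_zero_or_pos j with rfl | hj
    · have hL0 : S7.LpEl F q (Nat.log q 0) = 1 := by
        rw [Nat.log_zero_right, S7.LpEl, Finset.Icc_eq_empty (by omega), Finset.prod_empty,
          map_one]
      rw [hb0, hL0, inv_one, hDθ0, id_eq, mul_one]
    · rw [hbj j hj]; rfl
  have hEtb : ∀ j, S7.PSRel (S7.Rel0 pt) (Et (b j))
      (S7.Pz F q (Nat.log q j) * PowerSeries.coeff j (BB (Nat.log q j))) := by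
    intro j
    rw [hbrk j, map_mul]
    have h3 : Et (Dθ j ((S7.LpEl F q (Nat.log q j))⁻¹)) =
        PowerSeries.coeff j (PowerSeries.map Et (Eθ ((S7.LpEl F q (Nat.log q j))⁻¹))) := by
      rw [PowerSeries.coeff_map, hDθc]
    rw [h3]
    exact S7.PSRel_mul S7.Rel0_zero S7.Rel0_add S7.Rel0_mul (hRel1EtLp _) (hRel2BB _ j)
  have hDtb : ∀ i j, S7.Rel0 pt (Dt i (b j)) (PowerSeries.coeff i
      (S7.Pz F q (Nat.log q j) * PowerSeries.coeff j (BB (Nat.log q j)))) := fun i j => by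
    rw [← hDtc]; exact hEtb j i
  -- step 8: the ladder
  have hlogle : ∀ j, j ≤ k → Nat.log q j ≤ l - 1 := by
    intro j hjk
    rcases Nat.eq_zero_or_pos j with rfl | hj0
    · rw [Nat.log_zero_right]; omega
    · have hjl : j < q ^ l := lt_of_le_of_lt hjk (lt_of_lt_of_le hk hl)
      have hl1 : 1 ≤ l := by
        rcases Nat.eq_zero_or_pos l with rfl | h
        · rw [pow_zero] at hjl; omega
        · exact h
      have := Nat.log_lt_of_lt_pow (by omega : j ≠ 0) hjl
      omega
  have hladder : ∀ j, j ≤ k →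
      S7.Pz F q (Nat.log q j) * PowerSeries.coeff j (BB (Nat.log q j)) =
        S7.Pz F q (l - 1) * PowerSeries.coeff j (BB (l - 1)) := fun j hjk =>
    S7.ladder F q hq2 (Nat.lt_pow_succ_log_self (by omega) j) (l - 1) (hlogle j hjk)
      (hGGBB _) (hGGBB (l - 1))
  -- step 9: RHS relations
  have hccc : ∀ m, PowerSeries.constantCoeff
      (S7.cEl F q m + PowerSeries.X ^ q ^ m : PowerSeries (RatFunc F)) = S7.aEl F q m := by
    intro m
    rw [S7.cEl_eq, map_add, map_sub, PowerSeries.constantCoeff_C, PowerSeries.constantCoeff_X,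
      sub_zero, map_pow, PowerSeries.constantCoeff_X, zero_pow (by positivity), add_zero]
  have hcElU : ∀ m, 1 ≤ m →
      IsUnit (S7.cEl F q m + PowerSeries.X ^ q ^ m : PowerSeries (RatFunc F)) := fun m hm =>
    PowerSeries.isUnit_iff_constantCoeff.mpr (by
      rw [hccc m]
      exact isUnit_iff_ne_zero.mpr (S7.aEl_ne_zero F hq2 m hm))
  set Em : ℕ → PowerSeries (RatFunc F) := fun m =>
    if h : 1 ≤ m then PowerSeries.invOfUnit (S7.cEl F q m + PowerSeries.X ^ q ^ m)
      (isUnit_iff_ne_zero.mpr (S7.aEl_ne_zero F hq2 m h)).unit else 1 with hEmdef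
  have hEm : ∀ m, 1 ≤ m →
      (S7.cEl F q m + PowerSeries.X ^ q ^ m) * Em m = 1 := by
    intro m hm
    rw [hEmdef]
    simp only [dif_pos hm]
    exact PowerSeries.mul_invOfUnit _ _ (by
      rw [hccc m]
      exact ((isUnit_iff_ne_zero.mpr (S7.aEl_ne_zero F hq2 m hm)).unit_spec).symm)
  have hvne : ∀ m, 1 ≤ m → S7.vEl F q m ≠ 0 := fun m hm => S7.vEl_ne_zero F hq2 hm
  have hq2m : ∀ m, 1 ≤ m → 2 ≤ q ^ m := fun m hm =>
    le_trans hq2 (Nat.le_self_pow (by omega) q)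
  have hRel1Em : ∀ m, 1 ≤ m → S7.PSRel (S7.Rel0 pt) (Eθ ((S7.vEl F q m)⁻¹)) (Em m) := by
    intro m hm
    refine S7.PSRel_inv S7.Rel0_zero S7.Rel0_one S7.Rel0_add S7.Rel0_mul S7.Rel0_neg
      (Φ := Eθ (S7.vEl F q m)) (Ψ := S7.cEl F q m + PowerSeries.X ^ q ^ m)
      ?_ (by rw [← map_mul, mul_inv_cancel₀ (hvne m hm), map_one]) (hEm m hm)
      (u := (S7.vEl F q m)⁻¹) (u' := (S7.aEl F q m)⁻¹) ?_ ?_ ?_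
    · rw [hEθv m hm, S7.cEl_eq]
      exact S7.PSRel_C_sub_X_add_X_pow' S7.Rel0_zero S7.Rel0_one S7.Rel0_neg
        (S7.Rel0_vEl F q m) (hq2m m hm)
    · rw [hDθc, hDθ0, id_eq, inv_mul_cancel₀ (hvne m hm)]
    · rw [PowerSeries.coeff_zero_eq_constantCoeff, hccc m,
        inv_mul_cancel₀ (S7.aEl_ne_zero F hq2 m hm)]
    · exact S7.Rel0_inv (S7.Rel0_vEl F q m) (S7.aEl_ne_zero F hq2 m hm)
  have hηfact : Eθ (algebraMap (Polynomial (RatFunc F)) (RatFunc (RatFunc F))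
      (etaPoly F q (l - 1))) = ∏ m ∈ Icc 1 (l - 1),
        (Eθ ((S7.vEl F q m)⁻¹) * (PowerSeries.C (S7.eEl F q m) - PowerSeries.X)) := by
    rw [S7.etaPoly_emb, map_prod]
    refine Finset.prod_congr rfl fun m _ => ?_
    rw [map_mul, hEθe]
  have hReleta : S7.PSRel (S7.Rel0 pt) (Eθ (algebraMap (Polynomial (RatFunc F))
      (RatFunc (RatFunc F)) (etaPoly F q (l - 1))))
      (∏ m ∈ Icc 1 (l - 1), (Em m * S7.cEl F q m)) := by
    rw [hηfact]
    refine S7.PSRel_prod S7.Rel0_zero S7.Rel0_one S7.Rel0_add S7.Rel0_mul _ _ _ fun m hm => ?_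
    refine S7.PSRel_mul S7.Rel0_zero S7.Rel0_add S7.Rel0_mul
      (hRel1Em m (Finset.mem_Icc.mp hm).1) ?_
    rw [S7.cEl_eq]
    exact S7.PSRel_C_sub_X' S7.Rel0_zero S7.Rel0_one S7.Rel0_neg (S7.Rel0_eEl F q m)
  have hRHSrel : S7.Rel0 pt (Dθ k (algebraMap (Polynomial (RatFunc F))
      (RatFunc (RatFunc F)) (etaPoly F q (l - 1))))
      (PowerSeries.coeff k (∏ m ∈ Icc 1 (l - 1), (Em m * S7.cEl F q m))) := by
    rw [← hDθc]; exact hReleta k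
  -- step 10: the final power-series identity
  have hdiagBB : S7.diag (BB (l - 1)) * S7.WW F q (l - 1) = 1 := by
    have h := congrArg S7.diag (hGGBB (l - 1))
    rw [S7.diag_mul, S7.diag_GG, S7.diag_one] at h
    rw [mul_comm]; exact h
  have hEmWW : (∏ m ∈ Icc 1 (l - 1), Em m) * S7.WW F q (l - 1) = 1 := by
    rw [S7.WW, ← Finset.prod_mul_distrib]
    rw [Finset.prod_congr rfl fun m hm => by
      rw [mul_comm, hEm m (Finset.mem_Icc.mp hm).1]]
    exact Finset.prod_const_one
  have hWWne : S7.WW F q (l - 1) ≠ 0 := right_ne_zero_of_mul_eq_one hEmWW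
  have hdiagEm : S7.diag (BB (l - 1)) = ∏ m ∈ Icc 1 (l - 1), Em m :=
    mul_right_cancel₀ hWWne (hdiagBB.trans hEmWW.symm)
  have hfinal : S7.Pz F q (l - 1) * S7.diag (BB (l - 1)) =
      ∏ m ∈ Icc 1 (l - 1), (Em m * S7.cEl F q m) := by
    rw [hdiagEm, Finset.prod_mul_distrib]
    rw [show (∏ m ∈ Icc 1 (l - 1), S7.cEl F q m) = S7.Pz F q (l - 1) from rfl]
    ring
  -- conclusion
  refine ⟨?_, ?_, ?_⟩
  · intro ij _
    exact (S7.Rel0_eval (hDtb ij.1 ij.2)).1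
  · exact (S7.Rel0_eval hRHSrel).1
  · have hL : ∀ ij ∈ Finset.HasAntidiagonal.antidiagonal k,
        RatFunc.eval (RingHom.id (RatFunc F)) pt (Dt ij.1 (b ij.2)) =
          PowerSeries.coeff ij.1 (S7.Pz F q (l - 1) *
            PowerSeries.coeff ij.2 (BB (l - 1))) := by
      intro ij hij
      have hjk : ij.2 ≤ k := by
        have := Finset.HasAntidiagonal.mem_antidiagonal.mp hij
        omega
      rw [(S7.Rel0_eval (hDtb ij.1 ij.2)).2, hladder ij.2 hjk]
    rw [Finset.sum_congr rfl hL, (S7.Rel0_eval hRHSrel).2, ← hfinal]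
    rw [show S7.Pz F q (l - 1) * S7.diag (BB (l - 1)) =
        S7.diag (PowerSeries.C (S7.Pz F q (l - 1)) * BB (l - 1)) from by
      rw [S7.diag_mul, S7.diag_C]]
    rw [S7.diag, PowerSeries.coeff_mk]
    refine Finset.sum_congr rfl fun ij _ => ?_
    rw [PowerSeries.coeff_C_mul]
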